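/- arXiv:2512.01429 — 2 statements merged into one kernel-verified Lean document; each statement's English description precedes it below -/
import Mathlib

section
/- Let X be a sum of independent Bernoulli random variables with E[X] ≥ 2 + 1/5. Then E[min(X, 25)] ≥ 2. -/
open MeasureTheory ProbabilityTheory

/-- From a family of reals each at most 1 whose sum over `s` is at least `11/5`,
we can extract a subset whose sum lies in `[11/5, 16/5]`. -/
lemma exists_subset_sum_mem {α : Type*} [DecidableEq α] (p : α → ℝ)
    (h1 : ∀ i, p i ≤ 1) :
    ∀ s : Finset α, 11/5 ≤ ∑ i ∈ s, p i →
      ∃ T ⊆ s, 11/5 ≤ ∑ i ∈ T, p i ∧ ∑ i ∈ T, p i ≤ 16/5 := by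
  intro s
  induction s using Finset.strongInduction with
  | _ s ih =>
    intro hs
    by_cases h : ∑ i ∈ s, p i ≤ 16/5
    · exact ⟨s, le_refl _, hs, h⟩
    · have hne : s.Nonempty := by
        by_contra h'
        rw [Finset.not_nonempty_iff_eq_empty] at h'
        simp [h'] at hs
        linarith
      obtain ⟨i, hi⟩ := hne
      have hub : 11/5 ≤ ∑ j ∈ s.erase i, p j := by
        have he : ∑ j ∈ s.erase i, p j = ∑ j ∈ s, p j - p i :=
          Finset.sum_erase_eq_sub hi
        have := h1 i
        rw [he]; linarith
      obtain ⟨T, hT, h2, h3⟩ := ih (s.erase i) (Finset.erase_ssubset hi) hub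
      exact ⟨T, hT.trans (Finset.erase_subset _ _), h2, h3⟩

/-- Let `X` be a sum of independent Bernoulli random variables with `E[X] ≥ 2 + 1/5`.
Then `E[min(X, 25)] ≥ 2`. -/
theorem stmt0 {Ω : Type*} [MeasurableSpace Ω] (μ : Measure Ω) [IsProbabilityMeasure μ]
    {n : ℕ} (X : Fin n → Ω → ℝ)
    (hmeas : ∀ i, Measurable (X i))
    (hBer : ∀ i, ∀ᵐ ω ∂μ, X i ω = 0 ∨ X i ω = 1)
    (hindep : iIndepFun X μ)
    (hE : 2 + 1/5 ≤ ∫ ω, ∑ i, X i ω ∂μ) :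
    2 ≤ ∫ ω, min (∑ i, X i ω) 25 ∂μ := by
  classical
  set p : Fin n → ℝ := fun i => ∫ ω, X i ω ∂μ with hp
  -- integrability of each `X i`
  have hint : ∀ i, Integrable (X i) μ := by
    intro i
    refine Integrable.mono' (integrable_const 1) (hmeas i).aestronglyMeasurable ?_
    filter_upwards [hBer i] with ω hω
    rcases hω with h | h <;> simp [h]
  have hp1 : ∀ i, p i ≤ 1 := by
    intro i
    calc p i ≤ ∫ _, (1 : ℝ) ∂μ := by
          refine integral_mono_ae (hint i) (integrable_const 1) ?_
          filter_upwards [hBer i] with ω hω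
          rcases hω with h | h <;> simp [h]
      _ = 1 := by simp
  have hp0 : ∀ i, 0 ≤ p i := by
    intro i
    refine integral_nonneg_of_ae ?_
    filter_upwards [hBer i] with ω hω
    rcases hω with h | h <;> simp [h]
  -- total expectation
  have htot : ∫ ω, ∑ i, X i ω ∂μ = ∑ i, p i := by
    rw [integral_finset_sum _ fun i _ => hint i]
  rw [htot] at hE
  -- choose a subset T with sum of p in [11/5, 16/5]
  obtain ⟨T, -, hm1, hm2⟩ := exists_subset_sum_mem p hp1 Finset.univ (by
    norm_num at hE ⊢; linarith)
  set m : ℝ := ∑ i ∈ T, p i with hmdef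
  set S : Ω → ℝ := fun ω => ∑ i ∈ T, X i ω with hS
  have hSmeas : Measurable S := by
    apply Finset.measurable_sum
    intro i _; exact hmeas i
  have hSint : Integrable S μ :=
    integrable_finset_sum _ fun i _ => hint i
  have hSexp : ∫ ω, S ω ∂μ = m := by
    rw [hS]
    rw [integral_finset_sum _ fun i _ => hint i]
  -- products are integrable
  have hintmul : ∀ i j : Fin n, Integrable (fun ω => X i ω * X j ω) μ := by
    intro i j
    refine Integrable.mono' (integrable_const 1) ((hmeas i).mul (hmeas j)).aestronglyMeasurable ?_
    filter_upwards [hBer i, hBer j] with ω h1 h2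
    rcases h1 with h1 | h1 <;> rcases h2 with h2 | h2 <;> simp [h1, h2]
  -- second moment bound for each product
  have hprod : ∀ i ∈ T, ∀ j ∈ T,
      ∫ ω, X i ω * X j ω ∂μ ≤ p i * p j + (if i = j then p i else 0) := by
    intro i _ j _
    by_cases hij : i = j
    · subst hij
      have heq : ∫ ω, X i ω * X i ω ∂μ = p i := by
        refine integral_congr_ae ?_
        filter_upwards [hBer i] with ω hω
        rcases hω with h | h <;> simp [h]
      rw [heq, if_pos rfl]
      nlinarith [hp0 i, mul_nonneg (hp0 i) (hp0 i)]
    · have hIF : IndepFun (X i) (X j) μ := hindep.indepFun hij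
      have := hIF.integral_fun_mul_eq_mul_integral (hmeas i).aestronglyMeasurable (hmeas j).aestronglyMeasurable
      have heq : ∫ ω, X i ω * X j ω ∂μ = p i * p j := this
      rw [heq, if_neg hij]
      simp
  -- second moment of S
  have hS2int : Integrable (fun ω => S ω * S ω) μ := by
    have : (fun ω => S ω * S ω)
        = fun ω => ∑ i ∈ T, ∑ j ∈ T, X i ω * X j ω := by
      funext ω
      rw [hS]
      rw [Finset.sum_mul_sum]
    rw [this]
    exact integrable_finset_sum _ fun i _ =>
      integrable_finset_sum _ fun j _ => hintmul i j
  have hS2 : ∫ ω, S ω * S ω ∂μ ≤ m + m * m := by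
    have h1 : ∫ ω, S ω * S ω ∂μ = ∑ i ∈ T, ∑ j ∈ T, ∫ ω, X i ω * X j ω ∂μ := by
      have : (fun ω => S ω * S ω)
          = fun ω => ∑ i ∈ T, ∑ j ∈ T, X i ω * X j ω := by
        funext ω; rw [hS, Finset.sum_mul_sum]
      rw [this, integral_finset_sum _ fun i _ =>
        integrable_finset_sum _ fun j _ => hintmul i j]
      exact Finset.sum_congr rfl fun i _ =>
        integral_finset_sum _ fun j _ => hintmul i j
    rw [h1]
    calc ∑ i ∈ T, ∑ j ∈ T, ∫ ω, X i ω * X j ω ∂μ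
        ≤ ∑ i ∈ T, ∑ j ∈ T, (p i * p j + (if i = j then p i else 0)) := by
          refine Finset.sum_le_sum fun i hi => Finset.sum_le_sum fun j hj =>
            hprod i hi j hj
      _ = m * m + m := by
          rw [Finset.sum_congr rfl (fun i hi => Finset.sum_add_distrib)]
          rw [Finset.sum_add_distrib]
          congr 1
          · rw [Finset.sum_mul_sum (s := T) (t := T) (f := p) (g := p)]
          · exact Finset.sum_congr rfl fun i hi => by
              simp [Finset.sum_ite_eq, hi]
      _ = m + m * m := by ring
  -- pointwise a.e. bound
  have hstar : ∀ᵐ ω ∂μ, S ω - S ω * (S ω - 1) / 95 ≤ min (∑ i, X i ω) 25 := by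
    have hall : ∀ᵐ ω ∂μ, ∀ i, X i ω = 0 ∨ X i ω = 1 := ae_all_iff.2 hBer
    filter_upwards [hall] with ω hω
    have hnn : ∀ i, 0 ≤ X i ω := by
      intro i; rcases hω i with h | h <;> simp [h]
    have hST : S ω ≤ ∑ i, X i ω := by
      rw [hS]
      exact Finset.sum_le_sum_of_subset_of_nonneg (Finset.subset_univ T)
        (fun i _ _ => hnn i)
    have hScases : S ω = 0 ∨ 1 ≤ S ω := by
      by_cases hz : ∀ i ∈ T, X i ω = 0
      · left; rw [hS]; exact Finset.sum_eq_zero hz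
      · right
        push_neg at hz
        obtain ⟨i, hi, hne⟩ := hz
        have h1 : X i ω = 1 := (hω i).resolve_left hne
        have := Finset.single_le_sum (f := fun j => X j ω)
          (fun j _ => hnn j) hi
        rw [hS]; linarith
    set s := S ω with hsdef
    rcases le_or_gt s 25 with hle | hgt
    · have hmin : s ≤ min (∑ i, X i ω) 25 ∨ min (∑ i, X i ω) 25 = 25 := by
        rcases le_or_gt (∑ i, X i ω) 25 with h | h
        · left; rw [min_eq_left h]; exact hST
        · right; exact min_eq_right h.le
      have hs2 : 0 ≤ s * (s - 1) := by
        rcases hScases with h | h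
        · simp [h]
        · nlinarith
      rcases hmin with h | h
      · nlinarith
      · rw [h]; nlinarith
    · have h25 : min (∑ i, X i ω) 25 = 25 := min_eq_right (by linarith)
      rw [h25]
      nlinarith [sq_nonneg (s - 48)]
  -- integrability of both sides
  have hminint : Integrable (fun ω => min (∑ i, X i ω) 25) μ := by
    refine Integrable.mono' (integrable_const 25)
      ((Finset.measurable_sum Finset.univ fun i _ => hmeas i).min
        measurable_const).aestronglyMeasurable ?_
    filter_upwards [ae_all_iff.2 hBer] with ω hω
    have hnn : (0:ℝ) ≤ ∑ i, X i ω := Finset.sum_nonneg fun i _ => by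
      rcases hω i with h | h <;> simp [h]
    rw [Real.norm_eq_abs, abs_le]
    constructor
    · have : (0:ℝ) ≤ min (∑ i, X i ω) 25 := le_min hnn (by norm_num)
      linarith
    · exact min_le_right _ _
  have hrhsint : Integrable (fun ω => S ω - S ω * (S ω - 1) / 95) μ := by
    have : (fun ω => S ω - S ω * (S ω - 1) / 95)
        = fun ω => S ω - (S ω * S ω - S ω) / 95 := by
      funext ω; ring
    rw [this]
    exact hSint.sub ((hS2int.sub hSint).div_const 95)
  -- conclude
  have hmono : ∫ ω, S ω - S ω * (S ω - 1) / 95 ∂μ ≤ ∫ ω, min (∑ i, X i ω) 25 ∂μ :=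
    integral_mono_ae hrhsint hminint hstar
  have hval : ∫ ω, S ω - S ω * (S ω - 1) / 95 ∂μ
      = m - (∫ ω, S ω * S ω ∂μ - m) / 95 := by
    have heq : (fun ω => S ω - S ω * (S ω - 1) / 95)
        = fun ω => S ω - (S ω * S ω - S ω) / 95 := by
      funext ω; ring
    have h2 : Integrable (fun ω => (S ω * S ω - S ω) / 95) μ :=
      (hS2int.sub hSint).div_const 95
    have h3 : Integrable (fun ω => S ω * S ω - S ω) μ := hS2int.sub hSint
    rw [heq, integral_sub hSint h2]
    have h4 : ∫ ω, (S ω * S ω - S ω) / 95 ∂μ = (∫ ω, S ω * S ω - S ω ∂μ) / 95 :=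
      integral_div 95 _
    rw [h4, integral_sub hS2int hSint, hSexp]
  rw [hval] at hmono
  have : 2 ≤ m - (∫ ω, S ω * S ω ∂μ - m) / 95 := by
    nlinarith [hS2, hm1, hm2]
  linarith
end

section
/- Let n ≥ 4 and let T_1, ..., T_n be subsets of {1,...,n}, each of size at least √n. Then there exists a subset S of {1,...,n} of size ⌊2√n⌋ such that the union ∪_{i∈S} T_i intersects T_j for every j ∈ {1,...,n}. -/
/-- Let `n ≥ 4` and `T_1, …, T_n ⊆ [n]` each of size at least `√n`. Then there is a subset
`S ⊆ [n]` of size `⌊2√n⌋` such that `⋃_{i ∈ S} T_i` intersects every `T_j`. -/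
theorem stmt1 (n : ℕ) (hn : 4 ≤ n) (T : Fin n → Finset (Fin n))
    (hT : ∀ i, Real.sqrt n ≤ (T i).card) :
    ∃ S : Finset (Fin n), S.card = ⌊2 * Real.sqrt n⌋₊ ∧
      ∀ j, ((S.biUnion T) ∩ T j).Nonempty := by
  classical
  have hn0 : (0:ℝ) < n := by positivity
  have hsq : (0:ℝ) < Real.sqrt n := Real.sqrt_pos.mpr hn0
  have hTne : ∀ i, (T i).Nonempty := by
    intro i
    have : (0:ℝ) < ((T i).card : ℝ) := lt_of_lt_of_le hsq (hT i)
    have : 0 < (T i).card := by exact_mod_cast this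
    exact Finset.card_pos.mp this
  -- the family of pairwise-disjoint subfamilies
  set 𝒮 : Finset (Finset (Fin n)) :=
    Finset.univ.filter (fun S => (S : Set (Fin n)).PairwiseDisjoint T) with h𝒮
  have hmem : ∀ S, S ∈ 𝒮 ↔ (S : Set (Fin n)).PairwiseDisjoint T := by
    intro S; simp [h𝒮]
  have h𝒮ne : 𝒮.Nonempty := ⟨∅, (hmem ∅).mpr (by simp)⟩
  obtain ⟨S, hS𝒮, hSmax⟩ := Finset.exists_max_image 𝒮 Finset.card h𝒮ne
  have hSpd : (S : Set (Fin n)).PairwiseDisjoint T := (hmem S).mp hS𝒮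
  -- every T j meets some T i with i ∈ S
  have hhit : ∀ j, ∃ i ∈ S, ¬ Disjoint (T i) (T j) := by
    intro j
    by_contra h
    push_neg at h
    have hjS : j ∉ S := by
      intro hj
      exact (hTne j).ne_empty (disjoint_self.mp (h j hj))
    have hins : ((insert j S : Finset (Fin n)) : Set (Fin n)).PairwiseDisjoint T := by
      rw [Finset.coe_insert]
      exact hSpd.insert (fun i hi _ => ((h i hi).symm))
    have : insert j S ∈ 𝒮 := (hmem _).mpr hins
    have hcard := hSmax _ this
    rw [Finset.card_insert_of_notMem hjS] at hcard
    omega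
  -- cardinality bound: |S| * √n ≤ n
  have hcardle : (S.card : ℝ) ≤ Real.sqrt n := by
    have hdisj : (S.biUnion T).card = ∑ i ∈ S, (T i).card :=
      Finset.card_biUnion (fun i hi j hj hij => hSpd hi hj hij)
    have h1 : (S.card : ℝ) * Real.sqrt n ≤ ∑ i ∈ S, ((T i).card : ℝ) := by
      calc (S.card : ℝ) * Real.sqrt n = ∑ _i ∈ S, Real.sqrt n := by
            rw [Finset.sum_const, nsmul_eq_mul]
        _ ≤ ∑ i ∈ S, ((T i).card : ℝ) := Finset.sum_le_sum (fun i _ => hT i)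
    have h2 : ((S.biUnion T).card : ℝ) ≤ n := by
      have := Finset.card_le_univ (S.biUnion T)
      have hh : (S.biUnion T).card ≤ n := by simpa using this
      exact_mod_cast hh
    have h3 : (S.card : ℝ) * Real.sqrt n ≤ (n : ℝ) := by
      rw [← Nat.cast_sum] at h1
      calc (S.card : ℝ) * Real.sqrt n ≤ ((∑ i ∈ S, (T i).card : ℕ) : ℝ) := h1
        _ = ((S.biUnion T).card : ℝ) := by rw [hdisj]
        _ ≤ n := h2
    nlinarith [Real.sq_sqrt hn0.le, hsq]
  have hSle : S.card ≤ ⌊2 * Real.sqrt n⌋₊ := by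
    apply Nat.le_floor
    calc (S.card : ℝ) ≤ Real.sqrt n := hcardle
      _ ≤ 2 * Real.sqrt n := by linarith
  have hfl : ⌊2 * Real.sqrt n⌋₊ ≤ n := by
    apply Nat.floor_le_of_le
    have h4 : (2:ℝ) ≤ Real.sqrt n := by
      have : Real.sqrt 4 ≤ Real.sqrt n := Real.sqrt_le_sqrt (by exact_mod_cast hn)
      calc (2:ℝ) = Real.sqrt 4 := by
            rw [show (4:ℝ) = 2^2 by norm_num, Real.sqrt_sq (by norm_num)]
        _ ≤ Real.sqrt n := this
    calc 2 * Real.sqrt n ≤ Real.sqrt n * Real.sqrt n := by nlinarith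
      _ = n := Real.mul_self_sqrt hn0.le
  obtain ⟨S', hSS', _, hS'card⟩ :=
    Finset.exists_subsuperset_card_eq (Finset.subset_univ S) hSle (by simpa using hfl)
  refine ⟨S', hS'card, fun j => ?_⟩
  obtain ⟨i, hiS, hnd⟩ := hhit j
  obtain ⟨x, hx⟩ := Finset.not_disjoint_iff.mp hnd
  exact ⟨x, Finset.mem_inter.mpr ⟨Finset.mem_biUnion.mpr ⟨i, hSS' hiS, hx.1⟩, hx.2⟩⟩
end
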